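/- Lemma (Case (ii), upper bound). Suppose Assumptions 1 and 2 hold, let E ∈ ℝ, and let e* ∈ D(E) minimize d_l + d_u over D(E). If E + δ·Σ_j p̄_j > Σ_j ē'_j, then Σ_j min(ē'_j, e*_j + δ·p̄_j) = Σ_j ē'_j; equivalently, e*_j + δ·p̄_j ≥ ē'_j for every j. -/
import Mathlib


open Finset

/-- Lemma 3(b) (Case (ii), upper bound). -/
theorem case_ii_upper_bound
    (N : ℕ) (hN : 1 ≤ N) (δ : ℝ) (hδ : 0 < δ)
    (plb pub elb eub elb' eub' : Fin N → ℝ)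
    (hp : ∀ j, plb j ≤ pub j) (he : ∀ j, elb j ≤ eub j)
    (he' : ∀ j, elb' j ≤ eub' j)
    -- Assumption 1 (consistency of constraints)
    (hA1 : ∀ j, ∀ e : ℝ, elb j ≤ e → e ≤ eub j →
      max (elb' j) (e + δ * plb j) ≤ min (eub' j) (e + δ * pub j))
    -- Assumption 2(a)
    (hA2a : ∀ j, ∃ e : ℝ, elb j ≤ e ∧ e ≤ eub j ∧
      elb' j ≤ e + δ * plb j ∧ e + δ * pub j ≤ eub' j)
    -- Assumption 2(b)
    (hA2b : ∀ j, elb j + δ * plb j ≤ elb' j ∧ eub' j ≤ eub j + δ * pub j)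
    (E : ℝ) (estar : Fin N → ℝ)
    -- e* ∈ D(E)
    (hmem : (∀ j, elb j ≤ estar j ∧ estar j ≤ eub j) ∧ ∑ j, estar j = E)
    -- e* minimizes d_l + d_u over D(E)
    (hmin : ∀ e : Fin N → ℝ,
      ((∀ j, elb j ≤ e j ∧ e j ≤ eub j) ∧ ∑ j, e j = E) →
      ((∑ j, (max (estar j + δ * plb j) (elb' j) - (estar j + δ * plb j))) +
       (∑ j, ((estar j + δ * pub j) - min (estar j + δ * pub j) (eub' j)))) ≤
      ((∑ j, (max (e j + δ * plb j) (elb' j) - (e j + δ * plb j))) +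
       (∑ j, ((e j + δ * pub j) - min (e j + δ * pub j) (eub' j)))))
    -- case hypothesis
    (hcase : E + δ * ∑ j, pub j > ∑ j, eub' j) :
    (∑ j, min (eub' j) (estar j + δ * pub j) = ∑ j, eub' j) ∧
    (∀ j, estar j + δ * pub j ≥ eub' j) := by
  obtain ⟨hbox, hsum⟩ := hmem
  have key : ∀ j, eub' j ≤ estar j + δ * pub j := by
    by_contra hcon
    push_neg at hcon
    obtain ⟨k, hk⟩ := hcon
    -- there is an i with estar i + δ * pub i > eub' i
    have hsum2 : ∑ j, (estar j + δ * pub j) = E + δ * ∑ j, pub j := by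
      rw [Finset.sum_add_distrib, ← Finset.mul_sum, hsum]
    have hex : ∃ i, eub' i < estar i + δ * pub i := by
      by_contra h
      push_neg at h
      have := Finset.sum_le_sum (fun j (_ : j ∈ Finset.univ) => h j)
      rw [hsum2] at this
      linarith
    obtain ⟨i, hi⟩ := hex
    have hik : i ≠ k := by
      intro h; subst h; linarith
    -- slack facts from Assumption 2(a) at i
    obtain ⟨w, hw1, hw2, hw3, hw4⟩ := hA2a i
    have hwi : w < estar i := by nlinarith
    have h1 : elb i < estar i := lt_of_le_of_lt hw1 hwi
    have h5 : elb' i < estar i + δ * plb i := by linarith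
    -- slack at k from Assumption 2(b)
    have h2 : estar k < eub k := by
      have := (hA2b k).2
      linarith
    set ε : ℝ := min (min (estar i - elb i) (eub k - estar k))
        (min (min (estar i + δ * pub i - eub' i) (eub' k - (estar k + δ * pub k)))
          (estar i + δ * plb i - elb' i)) with hεdef
    have hε : 0 < ε := by
      refine lt_min (lt_min ?_ ?_) (lt_min (lt_min ?_ ?_) ?_) <;> linarith
    have hεa : ε ≤ estar i - elb i := le_trans (min_le_left _ _) (min_le_left _ _)
    have hεb : ε ≤ eub k - estar k := le_trans (min_le_left _ _) (min_le_right _ _)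
    have hεc : ε ≤ estar i + δ * pub i - eub' i :=
      le_trans (min_le_right _ _) (le_trans (min_le_left _ _) (min_le_left _ _))
    have hεd : ε ≤ eub' k - (estar k + δ * pub k) :=
      le_trans (min_le_right _ _) (le_trans (min_le_left _ _) (min_le_right _ _))
    have hεe : ε ≤ estar i + δ * plb i - elb' i :=
      le_trans (min_le_right _ _) (min_le_right _ _)
    -- perturbed point
    set e : Fin N → ℝ := fun j => estar j + (if j = k then ε else 0) - (if j = i then ε else 0)
      with hedef
    have hei : e i = estar i - ε := by simp [hedef, hik]
    have hek : e k = estar k + ε := by simp [hedef, Ne.symm hik]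
    have heo : ∀ j, j ≠ i → j ≠ k → e j = estar j := by
      intro j hji hjk; simp [hedef, hji, hjk]
    have hfeas : (∀ j, elb j ≤ e j ∧ e j ≤ eub j) ∧ ∑ j, e j = E := by
      constructor
      · intro j
        by_cases hji : j = i
        · subst hji; rw [hei]
          constructor <;> [linarith; linarith [(hbox j).2]]
        · by_cases hjk : j = k
          · subst hjk; rw [hek]
            constructor <;> [linarith [(hbox j).1]; linarith]
          · rw [heo j hji hjk]; exact hbox j
      · simp only [hedef]
        rw [Finset.sum_sub_distrib, Finset.sum_add_distrib]
        rw [Finset.sum_ite_eq' Finset.univ k (fun _ => ε),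
          Finset.sum_ite_eq' Finset.univ i (fun _ => ε)]
        simp [hsum]
    -- lower-cost comparisons
    have hA : ∑ j, (max (e j + δ * plb j) (elb' j) - (e j + δ * plb j)) ≤
        ∑ j, (max (estar j + δ * plb j) (elb' j) - (estar j + δ * plb j)) := by
      apply Finset.sum_le_sum
      intro j _
      by_cases hji : j = i
      · subst hji
        rw [hei, max_eq_left (by linarith), ]
        have := le_max_left (estar j + δ * plb j) (elb' j)
        linarith
      · by_cases hjk : j = k
        · subst hjk
          rw [hek]
          have hm : max (estar j + ε + δ * plb j) (elb' j) ≤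
              max (estar j + δ * plb j) (elb' j) + ε :=
            max_le (by linarith [le_max_left (estar j + δ * plb j) (elb' j)])
              (by linarith [le_max_right (estar j + δ * plb j) (elb' j)])
          linarith
        · rw [heo j hji hjk]
    have hB : ∑ j, ((e j + δ * pub j) - min (e j + δ * pub j) (eub' j)) <
        ∑ j, ((estar j + δ * pub j) - min (estar j + δ * pub j) (eub' j)) := by
      apply Finset.sum_lt_sum
      · intro j _
        by_cases hji : j = i
        · subst hji
          rw [hei, min_eq_right (by linarith), min_eq_right (by linarith)]
          linarith
        · by_cases hjk : j = k
          · subst hjk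
            rw [hek, min_eq_left (by linarith), min_eq_left (by linarith)]
            linarith
          · rw [heo j hji hjk]
      · refine ⟨i, Finset.mem_univ i, ?_⟩
        rw [hei, min_eq_right (by linarith), min_eq_right (by linarith)]
        linarith
    have := hmin e hfeas
    linarith
  refine ⟨?_, fun j => key j⟩
  exact Finset.sum_congr rfl fun j _ => min_eq_left (key j)
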